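/- Let Φ : M_n(ℂ) → M_n(ℂ) be a linear, positive, trace-preserving map, let ρ° be a state with Φ(ρ°) = ρ°, and let ε ∈ (0,1] be such that Φ(ρ) ≥ ε·ρ° (Loewner order) for every state ρ. Then ρ° is the unique stationary state: any state σ with Φ(σ) = σ satisfies σ = ρ°. -/

import Mathlib

open scoped ComplexOrder

/-- The trace norm of a matrix: `‖A‖₁ = Tr √(Aᴴ A)`.  For a Hermitian matrix this is
the sum of the absolute values of its eigenvalues. -/
noncomputable def traceNorm {n : ℕ} (A : Matrix (Fin n) (Fin n) ℂ) : ℝ :=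
  ((((Matrix.posSemidef_conjTranspose_mul_self A).1.eigenvectorUnitary : Matrix (Fin n) (Fin n) ℂ) *
      Matrix.diagonal ((fun x : ℝ => (x : ℂ)) ∘ (Real.sqrt ·) ∘ (Matrix.posSemidef_conjTranspose_mul_self A).1.eigenvalues) *
      (star (Matrix.posSemidef_conjTranspose_mul_self A).1.eigenvectorUnitary :
        Matrix (Fin n) (Fin n) ℂ)).trace).re

lemma psd_real_smul {n : ℕ} {c : ℝ} (hc : 0 ≤ c) {A : Matrix (Fin n) (Fin n) ℂ}
    (hA : A.PosSemidef) : ((c : ℂ) • A).PosSemidef := by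
  refine Matrix.PosSemidef.of_dotProduct_mulVec_nonneg ?_ ?_
  · show ((c : ℂ) • A).conjTranspose = _
    rw [Matrix.conjTranspose_smul, hA.1.eq]
    simp
  · intro x
    rw [Matrix.smul_mulVec, dotProduct_smul, smul_eq_mul]
    exact mul_nonneg (Complex.zero_le_real.mpr hc) (hA.dotProduct_mulVec_nonneg x)

lemma psd_trace_zero {n : ℕ} {A : Matrix (Fin n) (Fin n) ℂ}
    (hA : A.PosSemidef) (h : A.trace = 0) : A = 0 := by
  exact hA.trace_eq_zero_iff.mp h

/-- Uniqueness of the stationary state of a positive trace-preserving map satisfying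
a Doeblin-type minorization `Φ(ρ) ≥ ε·ρ°`. -/
theorem doeblin_unique_stationary_state {n : ℕ}
    (Φ : Matrix (Fin n) (Fin n) ℂ →ₗ[ℂ] Matrix (Fin n) (Fin n) ℂ)
    (hpos : ∀ A : Matrix (Fin n) (Fin n) ℂ, A.PosSemidef → (Φ A).PosSemidef)
    (htr : ∀ A : Matrix (Fin n) (Fin n) ℂ, (Φ A).trace = A.trace)
    (ρ₀ : Matrix (Fin n) (Fin n) ℂ) (hρ₀ : ρ₀.PosSemidef) (hρ₀tr : ρ₀.trace = 1)
    (hfix : Φ ρ₀ = ρ₀)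
    (ε : ℝ) (hε0 : 0 < ε) (hε1 : ε ≤ 1)
    (hDoeblin : ∀ ρ : Matrix (Fin n) (Fin n) ℂ, ρ.PosSemidef → ρ.trace = 1 →
      (Φ ρ - (ε : ℂ) • ρ₀).PosSemidef)
    (σ : Matrix (Fin n) (Fin n) ℂ) (hσ : σ.PosSemidef) (hσtr : σ.trace = 1)
    (hσfix : Φ σ = σ) :
    σ = ρ₀ := by
  -- replace ε by e = ε/2 < 1
  set e : ℝ := ε / 2 with he_def
  have he0 : 0 < e := by positivity
  have he1 : e < 1 := by simp only [he_def]; linarith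
  have hD' : ∀ ρ : Matrix (Fin n) (Fin n) ℂ, ρ.PosSemidef → ρ.trace = 1 →
      (Φ ρ - (e : ℂ) • ρ₀).PosSemidef := by
    intro ρ h1 h2
    have key := (hDoeblin ρ h1 h2).add (psd_real_smul (c := ε - e) (by linarith) hρ₀)
    have : Φ ρ - (ε : ℂ) • ρ₀ + ((ε - e : ℝ) : ℂ) • ρ₀ = Φ ρ - (e : ℂ) • ρ₀ := by
      push_cast
      module
    rwa [this] at key
  have hpe : ∀ k : ℕ, 0 < (1 - e) ^ k := fun k => pow_pos (by linarith) k
  -- key induction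
  have key : ∀ k : ℕ, (σ - ((1 - (1 - e) ^ k : ℝ) : ℂ) • ρ₀).PosSemidef := by
    intro k
    induction k with
    | zero => simpa using hσ
    | succ k ih =>
      set c : ℝ := 1 - (1 - e) ^ k with hc_def
      set τ : Matrix (Fin n) (Fin n) ℂ := σ - (c : ℂ) • ρ₀ with hτ_def
      have hτtr : τ.trace = (((1 - e) ^ k : ℝ) : ℂ) := by
        rw [hτ_def, Matrix.trace_sub, Matrix.trace_smul, hσtr, hρ₀tr, smul_eq_mul, mul_one]
        push_cast [hc_def]
        ring
      set ρ : Matrix (Fin n) (Fin n) ℂ := ((((1 - e) ^ k)⁻¹ : ℝ) : ℂ) • τ with hρ_def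
      have hρpsd : ρ.PosSemidef := psd_real_smul (inv_nonneg.mpr (hpe k).le) ih
      have hρtr : ρ.trace = 1 := by
        rw [hρ_def, Matrix.trace_smul, hτtr, smul_eq_mul]
        norm_cast
        exact inv_mul_cancel₀ (hpe k).ne'
      have hρfix : Φ ρ = ρ := by
        rw [hρ_def, map_smul, hτ_def, map_sub, map_smul, hσfix, hfix]
      have hstep := psd_real_smul (le_of_lt (hpe k)) (hρfix ▸ hD' ρ hρpsd hρtr)
      have heq : (((1 - e) ^ k : ℝ) : ℂ) • (ρ - (e : ℂ) • ρ₀)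
          = σ - ((1 - (1 - e) ^ (k + 1) : ℝ) : ℂ) • ρ₀ := by
        rw [hρ_def, hτ_def]
        have h1 : (((1 - e) ^ k : ℝ) : ℂ) * ((((1 - e) ^ k)⁻¹ : ℝ) : ℂ) = 1 := by
          norm_cast
          exact mul_inv_cancel₀ (hpe k).ne'
        rw [smul_sub, smul_smul, h1, one_smul, smul_smul]
        have h2 : ((1 - (1 - e) ^ (k + 1) : ℝ) : ℂ)
            = (c : ℂ) + (((1 - e) ^ k : ℝ) : ℂ) * (e : ℂ) := by
          push_cast [hc_def]
          ring
        rw [h2]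
        module
      rw [heq] at hstep
      exact hstep
  -- pass to the limit to get σ - ρ₀ PSD
  have hsub : (σ - ρ₀).PosSemidef := by
    refine Matrix.PosSemidef.of_dotProduct_mulVec_nonneg ?_ ?_
    · exact hσ.1.sub hρ₀.1
    · intro x
      have him : (dotProduct (star x) ((σ - ρ₀).mulVec x)).im = 0 := by
        have hherm := hσ.1.sub hρ₀.1
        have := hherm.eq
        have hstar : star (dotProduct (star x) ((σ - ρ₀).mulVec x))
            = dotProduct (star x) ((σ - ρ₀).mulVec x) := by
          nth_rewrite 2 [← hherm.eq]
          rw [Matrix.star_dotProduct, Matrix.star_mulVec, star_star,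
            Matrix.dotProduct_mulVec, Matrix.vecMul_conjTranspose, star_star,
            dotProduct_comm]
        have h := congrArg Complex.im hstar
        simp only [Complex.star_def, Complex.conj_im] at h
        linarith
      have hre : 0 ≤ (dotProduct (star x) ((σ - ρ₀).mulVec x)).re := by
        set q : ℝ := (dotProduct (star x) (σ.mulVec x)).re with hq
        set p : ℝ := (dotProduct (star x) (ρ₀.mulVec x)).re with hp
        have hpnn : 0 ≤ p := hρ₀.re_dotProduct_nonneg x
        have hgen : ∀ (r : ℝ) (M : Matrix (Fin n) (Fin n) ℂ),
            (dotProduct (star x) (((r : ℂ) • M).mulVec x)).re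
              = r * (dotProduct (star x) (M.mulVec x)).re := by
          intro r M
          rw [Matrix.smul_mulVec, dotProduct_smul, smul_eq_mul,
            Complex.re_ofReal_mul]
        have hbound : ∀ k : ℕ, -((1 - e) ^ k * p) ≤ q - p := by
          intro k
          have hk : (0:ℝ) ≤ (dotProduct (star x)
              ((σ - ((1 - (1 - e) ^ k : ℝ) : ℂ) • ρ₀).mulVec x)).re :=
            (key k).re_dotProduct_nonneg x
          rw [Matrix.sub_mulVec, dotProduct_sub, Complex.sub_re, hgen] at hk
          nlinarith [hk]
        have hlim : Filter.Tendsto (fun k : ℕ => -((1 - e) ^ k * p)) Filter.atTop (nhds 0) := by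
          have := (tendsto_pow_atTop_nhds_zero_of_lt_one (by linarith : (0:ℝ) ≤ 1 - e)
            (by linarith)).mul_const p
          simpa using this.neg
        have h0 : (0 : ℝ) ≤ q - p := le_of_tendsto hlim (Filter.Eventually.of_forall hbound)
        have hexp2 : (dotProduct (star x) ((σ - ρ₀).mulVec x)).re = q - p := by
          rw [Matrix.sub_mulVec, dotProduct_sub]
          simp [hq, hp, Complex.sub_re]
        rw [hexp2]
        exact h0
      rw [Complex.le_def]
      constructor
      · simpa using hre
      · simpa using him.symm
  have htr0 : (σ - ρ₀).trace = 0 := by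
    rw [Matrix.trace_sub, hσtr, hρ₀tr, sub_self]
  have := psd_trace_zero hsub htr0
  exact sub_eq_zero.mp this
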